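/- Let G be a finite group acting on a finite set X. For x, y ∈ X with Gx ≠ Gy and G_x ≤ G_y, let [x ↦ y] ∈ End_G(X) be the map sending g·x to g·y for every g ∈ G and fixing all other points. Then the set W = {[x ↦ y] : x, y ∈ X, Gx ≠ Gy, G_x ≤ G_y} generates End_G(X) modulo Aut_G(X), i.e., the submonoid generated by W ∪ Aut_G(X) equals End_G(X). -/

import Mathlib

/-- The monoid of all `G`-equivariant transformations of `X`, as a submonoid of
`Function.End X` (composition of functions). -/
def gEnd (G X : Type*) [Group G] [MulAction G X] : Submonoid (Function.End X) where
  carrier := {f | ∀ (g : G) (x : X), f (g • x) = g • f x}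
  one_mem' := fun _ _ => rfl
  mul_mem' := fun {f₁ f₂} h₁ h₂ g x => by
    show f₁ (f₂ (g • x)) = g • f₁ (f₂ x)
    rw [h₂, h₁]

/-- The group of all bijective `G`-equivariant transformations of `X`, as a subgroup of
`Equiv.Perm X`. -/
def gAut (G X : Type*) [Group G] [MulAction G X] : Subgroup (Equiv.Perm X) where
  carrier := {f | ∀ (g : G) (x : X), f (g • x) = g • f x}
  one_mem' := fun _ _ => rfl
  mul_mem' := fun {f₁ f₂} h₁ h₂ g x => by
    show f₁ (f₂ (g • x)) = g • f₁ (f₂ x)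
    rw [h₂, h₁]
  inv_mem' := fun {f} hf g x => f.injective (by
    have hai : ∀ z, f (f⁻¹ z) = z := fun z => Equiv.apply_symm_apply f z
    rw [hai, hf, hai])

/-- The elements of `Aut_G(X)` viewed as a set of transformations of `X`. -/
def autSet (G X : Type*) [Group G] [MulAction G X] : Set (Function.End X) :=
  (fun e : Equiv.Perm X => (e : X → X)) '' (gAut G X)

open Classical in
/-- The idempotent-like collapsing map `[x ↦ y]`: it sends `g • x` to `g • y`
and fixes every point outside the orbit of `x`.  (It is well defined as soon as
the stabilizer of `x` is contained in the stabilizer of `y`.) -/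
noncomputable def collapse {G X : Type*} [Group G] [MulAction G X] (x y : X) : X → X :=
  fun z => if h : z ∈ MulAction.orbit G x then h.choose • y else z

section Aux

variable {G X : Type*} [Group G] [MulAction G X]

lemma collapse_smul_apply {x y : X}
    (hxy : MulAction.stabilizer G x ≤ MulAction.stabilizer G y) (g : G) :
    collapse (G := G) x y (g • x) = g • y := by
  have h : (g • x) ∈ MulAction.orbit G x := ⟨g, rfl⟩
  have hs : h.choose • x = g • x := h.choose_spec
  have h1 : (g⁻¹ * h.choose) • x = x := by rw [mul_smul, hs, inv_smul_smul]
  have h2 : (g⁻¹ * h.choose) • y = y := hxy h1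
  rw [mul_smul] at h2
  unfold collapse
  rw [dif_pos h]
  calc h.choose • y = g • (g⁻¹ • (h.choose • y)) := (smul_inv_smul g _).symm
    _ = g • y := by rw [h2]

lemma collapse_apply_of_not_mem {x y z : X} (hz : z ∉ MulAction.orbit G x) :
    collapse (G := G) x y z = z := by
  unfold collapse
  rw [dif_neg hz]

lemma collapse_mem_gEnd {x y : X}
    (hxy : MulAction.stabilizer G x ≤ MulAction.stabilizer G y) :
    (collapse (G := G) x y : Function.End X) ∈ gEnd G X := by
  intro g z
  by_cases h : z ∈ MulAction.orbit G x
  · obtain ⟨k, rfl⟩ := h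
    rw [← mul_smul, collapse_smul_apply hxy, collapse_smul_apply hxy, mul_smul]
  · have h' : g • z ∉ MulAction.orbit G x := fun hc => by
      obtain ⟨k, hk⟩ := MulAction.mem_orbit_iff.mp hc
      exact h (MulAction.mem_orbit_iff.mpr ⟨g⁻¹ * k, by rw [mul_smul, hk, inv_smul_smul]⟩)
    rw [collapse_apply_of_not_mem h', collapse_apply_of_not_mem h]

lemma stmt10_aux [Finite X] :
    ∀ (n : ℕ) (f : Function.End X), (∀ (g : G) (x : X), f (g • x) = g • f x) →
      Set.ncard {z | f z ≠ z} ≤ n →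
      f ∈ Submonoid.closure
        ({f : Function.End X | ∃ x y : X,
            MulAction.orbit G x ≠ MulAction.orbit G y ∧
            MulAction.stabilizer G x ≤ MulAction.stabilizer G y ∧
            f = collapse (G := G) x y} ∪ autSet G X) := by
  intro n
  induction n with
  | zero =>
    intro f hf hcard
    have hempty : {z | f z ≠ z} = ∅ := by
      have := Set.ncard_eq_zero (Set.toFinite _) |>.mp (Nat.le_zero.mp hcard)
      exact this
    have : f = 1 := by
      funext z
      by_contra hz
      exact absurd (Set.eq_empty_iff_forall_notMem.mp hempty z hz) (fun h => h)
    rw [this]; exact Submonoid.one_mem _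
  | succ n ih =>
    intro f hf hcard
    by_cases hb : Function.Bijective f
    · refine Submonoid.subset_closure (Or.inr ⟨Equiv.ofBijective f hb, ?_, rfl⟩)
      exact fun g z => hf g z
    · classical
      have hsurj : ¬ Function.Surjective f := fun h =>
        hb ⟨Finite.injective_iff_surjective.mpr h, h⟩
      simp only [Function.Surjective, not_forall, not_exists] at hsurj
      obtain ⟨u, hu⟩ := hsurj
      -- hu : ∀ z, f z ≠ u
      have hrange : ∀ (g : G) (z : X), f z ≠ g • u := by
        intro g z h
        exact hu (g⁻¹ • z) (by rw [hf, h, inv_smul_smul])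
      set y := f u with hy
      have hne : MulAction.orbit G u ≠ MulAction.orbit G y := by
        intro h
        have : y ∈ MulAction.orbit G u := h ▸ MulAction.mem_orbit_self y
        obtain ⟨g, hg⟩ := this
        exact hrange g u hg.symm
      have hst : MulAction.stabilizer G u ≤ MulAction.stabilizer G y := by
        intro g hg
        have hg' : g • u = u := hg
        show g • y = y
        rw [hy, ← hf, hg']
      set g' : Function.End X := fun z => if z ∈ MulAction.orbit G u then z else f z
        with hg'def
      have hg'eq : ∀ (g : G) (z : X), g' (g • z) = g • g' z := by
        intro g z
        by_cases h : z ∈ MulAction.orbit G u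
        · have h2 : g • z ∈ MulAction.orbit G u := by
            obtain ⟨k, rfl⟩ := h
            exact ⟨g * k, mul_smul g k u⟩
          simp only [hg'def, if_pos h, if_pos h2]
        · have h2 : g • z ∉ MulAction.orbit G u := fun hc => by
            obtain ⟨k, hk⟩ := MulAction.mem_orbit_iff.mp hc
            exact h (MulAction.mem_orbit_iff.mpr ⟨g⁻¹ * k, by rw [mul_smul, hk, inv_smul_smul]⟩)
          simp only [hg'def, if_neg h, if_neg h2, hf]
      have hfz_not : ∀ z : X, f z ∉ MulAction.orbit G u := by
        intro z hc
        obtain ⟨k, hk⟩ := hc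
        exact hrange k z hk.symm
      let c : Function.End X := collapse (G := G) u y
      have hfact : f = c * g' := by
        funext z
        show f z = collapse (G := G) u y (g' z)
        by_cases h : z ∈ MulAction.orbit G u
        · obtain ⟨k, rfl⟩ := h
          have hmem : (k • u) ∈ MulAction.orbit G u := MulAction.mem_orbit_iff.mpr ⟨k, rfl⟩
          have : g' (k • u) = k • u := by
            show (if (k • u) ∈ MulAction.orbit G u then k • u else f (k • u)) = k • u
            rw [if_pos hmem]
          rw [this, collapse_smul_apply hst, hf, hy]
        · have : g' z = f z := by simp only [hg'def, if_neg h]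
          rw [this, collapse_apply_of_not_mem (hfz_not z)]
      have hsub : {z | g' z ≠ z} ⊆ {z | f z ≠ z} \ {u} := by
        intro z hz
        by_cases h : z ∈ MulAction.orbit G u
        · exact absurd (by simp only [hg'def, if_pos h]) hz
        · have hzf : g' z = f z := by simp only [hg'def, if_neg h]
          refine ⟨by rw [Set.mem_setOf_eq, ← hzf]; exact hz, ?_⟩
          intro hzu
          rw [Set.mem_singleton_iff] at hzu
          rw [hzu] at h
          exact h (MulAction.mem_orbit_self u)
      have humem : u ∈ {z | f z ≠ z} := fun h => hu u h
      have hlt : Set.ncard {z | g' z ≠ z} ≤ n := by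
        have h1 : Set.ncard {z | g' z ≠ z} ≤ Set.ncard ({z | f z ≠ z} \ {u}) :=
          Set.ncard_le_ncard hsub (Set.toFinite _)
        have h2 : Set.ncard ({z | f z ≠ z} \ {u}) < Set.ncard {z | f z ≠ z} :=
          Set.ncard_diff_singleton_lt_of_mem humem (Set.toFinite _)
        omega
      rw [hfact]
      refine Submonoid.mul_mem _ (Submonoid.subset_closure (Or.inl ⟨u, y, hne, hst, rfl⟩))
        (ih g' hg'eq hlt)

end Aux

/-- For a finite group acting on a finite set, the collapsing maps
`[x ↦ y]` (for `Gx ≠ Gy` and `G_x ≤ G_y`) generate `End_G(X)` modulo `Aut_G(X)`. -/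
theorem stmt10 {G X : Type*} [Group G] [MulAction G X] [Finite G] [Finite X] :
    Submonoid.closure
      ({f : Function.End X | ∃ x y : X,
          MulAction.orbit G x ≠ MulAction.orbit G y ∧
          MulAction.stabilizer G x ≤ MulAction.stabilizer G y ∧
          f = collapse (G := G) x y} ∪ autSet G X) = gEnd G X := by
  apply le_antisymm
  · rw [Submonoid.closure_le]
    rintro f (⟨x, y, -, hxy, rfl⟩ | ⟨e, he, rfl⟩)
    · exact collapse_mem_gEnd hxy
    · exact fun g z => he g z
  · intro f hf
    exact stmt10_aux (Set.ncard {z | f z ≠ z}) f hf le_rfl
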